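/- Every tree is a contact B₀-VPG graph. -/

import Mathlib

open SimpleGraph

/-- A horizontal grid segment on row `y`, spanning columns `a` to `b`. -/
def IsHorizSeg (S : Set (ℤ × ℤ)) : Prop :=
  ∃ y a b : ℤ, a ≤ b ∧ S = {p : ℤ × ℤ | p.2 = y ∧ a ≤ p.1 ∧ p.1 ≤ b}

/-- A vertical grid segment on column `x`, spanning rows `a` to `b`. -/
def IsVertSeg (S : Set (ℤ × ℤ)) : Prop :=
  ∃ x a b : ℤ, a ≤ b ∧ S = {p : ℤ × ℤ | p.1 = x ∧ a ≤ p.2 ∧ p.2 ≤ b}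

/-- A grid segment is a horizontal or vertical segment. -/
def IsGridSegment (S : Set (ℤ × ℤ)) : Prop := IsHorizSeg S ∨ IsVertSeg S

/-- `p` is an endpoint (extreme point) of the grid segment `S`. -/
def IsEndpointOf (p : ℤ × ℤ) (S : Set (ℤ × ℤ)) : Prop :=
  (∃ y a b : ℤ, a ≤ b ∧ S = {q : ℤ × ℤ | q.2 = y ∧ a ≤ q.1 ∧ q.1 ≤ b} ∧
      (p = (a, y) ∨ p = (b, y))) ∨
  (∃ x a b : ℤ, a ≤ b ∧ S = {q : ℤ × ℤ | q.1 = x ∧ a ≤ q.2 ∧ q.2 ≤ b} ∧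
      (p = (x, a) ∨ p = (x, b)))

/-- A contact B₀-VPG representation of a simple graph `G`. -/
structure ContactB0VPGRep {V : Type*} (G : SimpleGraph V) where
  seg : V → Set (ℤ × ℤ)
  isSeg : ∀ v : V, IsGridSegment (seg v)
  adj_iff : ∀ u v : V, u ≠ v → (G.Adj u v ↔ (seg u ∩ seg v).Nonempty)
  inter_subsingleton : ∀ u v : V, u ≠ v → (seg u ∩ seg v).Subsingleton
  contact : ∀ u v : V, u ≠ v → ∀ p ∈ seg u ∩ seg v,
    IsEndpointOf p (seg u) ∨ IsEndpointOf p (seg v)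

/-- A graph is contact B₀-VPG if it admits a contact B₀-VPG representation. -/
def ContactB0VPG {V : Type*} (G : SimpleGraph V) : Prop :=
  Nonempty (ContactB0VPGRep G)

/-- `G` is `H`-free: no induced subgraph of `G` is isomorphic to `H`. -/
def Free {V : Type*} {W : Type*} (G : SimpleGraph V) (H : SimpleGraph W) : Prop :=
  IsEmpty (H ↪g G)

/-- The complete graph `K₅`. -/
def K5 : SimpleGraph (Fin 5) := ⊤

/-- The complete bipartite graph `K₃,₃`. -/
def K33 : SimpleGraph (Fin 3 ⊕ Fin 3) := completeBipartiteGraph (Fin 3) (Fin 3)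

/-- The graph `K₄ − e`. -/
def K4e : SimpleGraph (Fin 4) := (⊤ : SimpleGraph (Fin 4)).deleteEdges {s(0, 1)}

/-- The graph `H₀`: three copies of `K₄` sharing exactly the common vertex `0`. -/
def H0 : SimpleGraph (Fin 10) :=
  SimpleGraph.fromRel (fun a b => a = 0 ∨ b = 0 ∨ (a.val - 1) / 3 = (b.val - 1) / 3)

/-- A graph is chordal if it has no induced cycle of length at least 4. -/
def Chordal {V : Type*} (G : SimpleGraph V) : Prop :=
  ∀ n : ℕ, 4 ≤ n → IsEmpty (cycleGraph n ↪g G)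

/-- In the representation `R`, `p` is a free endpoint of the segment of `v`. -/
def RepFreeEndpoint {V : Type*} {G : SimpleGraph V} (R : ContactB0VPGRep G)
    (v : V) (p : ℤ × ℤ) : Prop :=
  IsEndpointOf p (R.seg v) ∧ ∀ w : V, w ≠ v → p ∉ R.seg w

/-- `v` is internal: no contact B₀-VPG representation of `G` has a free endpoint of `P_v`. -/
def InternalVertex {V : Type*} (G : SimpleGraph V) (v : V) : Prop :=
  ∀ R : ContactB0VPGRep G, ¬ ∃ p : ℤ × ℤ, RepFreeEndpoint R v p

/-- The graph `G_T` built from a base tree `T`: each vertex `v` of `T` gets `3 - deg v`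
new pendant copies of `K₄` through `v`. -/
def GraphGT {V : Type*} [Fintype V] (T : SimpleGraph V) [DecidableRel T.Adj] :
    SimpleGraph (V ⊕ Σ v : V, Fin (3 - T.degree v) × Fin 3) :=
  SimpleGraph.fromRel (fun a b =>
    match a, b with
    | Sum.inl u, Sum.inl w => T.Adj u w
    | Sum.inl u, Sum.inr x => u = x.1
    | Sum.inr x, Sum.inl w => x.1 = w
    | Sum.inr x, Sum.inr y => x.1 = y.1 ∧ (x.2.1 : ℕ) = (y.2.1 : ℕ))

/-- A witness that `G` is (isomorphic to) a graph `G_T` for a base tree `T`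
with at least two vertices and maximum degree at most `d`. -/
structure BaseTreeWitness {W : Type*} (G : SimpleGraph W) (d : ℕ) where
  V : Type
  [instFin : Fintype V]
  T : SimpleGraph V
  [instDec : DecidableRel T.Adj]
  conn : T.Connected
  acyc : T.IsAcyclic
  two_le : 2 ≤ Fintype.card V
  maxdeg : ∀ v : V, T.degree v ≤ d
  iso : Nonempty (G ≃g GraphGT T)

/-- Membership in the family `𝒯`. -/
def InFamilyT {W : Type*} (G : SimpleGraph W) : Prop :=
  Nonempty (G ≃g H0) ∨ Nonempty (BaseTreeWitness G 3)

/-- Membership in the family `𝒯'` (base trees of maximum degree at most 2, plus `H₀`). -/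
def InFamilyT' {W : Type*} (G : SimpleGraph W) : Prop :=
  Nonempty (G ≃g H0) ∨ Nonempty (BaseTreeWitness G 2)

namespace TreeVpg
open List



set_option linter.unusedSectionVars false
variable {α : Type*} [LinearOrder α]

lemma lex_append (r : α → α → Prop) (l t : List α) (a : α) : List.Lex r l (l ++ a :: t) := by
  induction l with
  | nil => exact List.Lex.nil
  | cons b l ih => exact List.Lex.cons ih

lemma lt_of_prefix_ne {l l' : List α} (h : l <+: l') (hne : l ≠ l') : l < l' := by
  obtain ⟨t, rfl⟩ := h
  cases t with
  | nil => simp at hne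
  | cons a t => exact lex_append _ _ _ _

lemma le_of_prefix {l l' : List α} (h : l <+: l') : l ≤ l' := by
  rcases eq_or_ne l l' with rfl | hne
  · exact le_rfl
  · exact le_of_lt (lt_of_prefix_ne h hne)

lemma prefix_of_le_of_le : ∀ (l₁ l₂ l₃ : List α), l₁ <+: l₃ → l₁ ≤ l₂ → l₂ ≤ l₃ → l₁ <+: l₂
  | [], _, _, _, _, _ => nil_prefix
  | a :: t₁, l₂, l₃, h13, h12, h23 => by
    rcases eq_or_lt_of_le h12 with rfl | h12'
    · exact prefix_refl _
    rcases eq_or_lt_of_le h23 with rfl | h23'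
    · exact h13
    obtain ⟨t₃, rfl⟩ : ∃ t₃, l₃ = a :: t₃ := by
      obtain ⟨s, hs⟩ := h13
      cases l₃ with
      | nil => simp at hs
      | cons b t₃ => exact ⟨t₃, by rw [cons_append] at hs; rw [← (List.cons.inj hs).1]⟩
    have h13' : t₁ <+: t₃ := by
      obtain ⟨s, hs⟩ := h13
      rw [cons_append] at hs
      exact ⟨s, (List.cons.inj hs).2⟩
    cases l₂ with
    | nil => exact absurd (show List.Lex (· < ·) (a :: t₁) [] from h12') List.not_lex_nil
    | cons b t₂ =>
      have hlex12 : List.Lex (· < ·) (a :: t₁) (b :: t₂) := h12'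
      have hlex23 : List.Lex (· < ·) (b :: t₂) (a :: t₃) := h23'
      have hab : a = b := by
        cases hlex12 with
        | cons _ => rfl
        | rel hr =>
          cases hlex23 with
          | cons _ => rfl
          | rel hr' => exact absurd (hr.trans hr') (lt_irrefl a)
      subst hab
      have h1 : t₁ ≤ t₂ := le_of_lt (List.lex_cons_iff.mp hlex12)
      have h2 : t₂ ≤ t₃ := le_of_lt (List.lex_cons_iff.mp hlex23)
      exact List.cons_prefix_cons.mpr ⟨rfl, prefix_of_le_of_le t₁ t₂ t₃ h13' h1 h2⟩

lemma prefix_concat_cases {l₁ l₂ : List α} {a : α} (h : l₁ <+: l₂ ++ [a]) :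
    l₁ = l₂ ++ [a] ∨ l₁ <+: l₂ := by
  obtain ⟨t, ht⟩ := h
  rcases eq_or_ne t [] with rfl | hne
  · left; simpa using ht
  · right
    obtain ⟨t', b, rfl⟩ := t.eq_nil_or_concat.resolve_left hne
    rw [List.concat_eq_append, ← append_assoc] at ht
    have := (List.append_inj' ht (by simp)).1
    exact ⟨t', this⟩

lemma concat_last_eq {l₁ l₂ : List α} {a b : α} (h : l₁ ++ [a] = l₂ ++ [b]) : a = b := by
  have := (List.append_inj' h (by simp)).2
  simpa using this


structure DFSData {V : Type*} (G : SimpleGraph V) where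
  root : V
  par : V → V
  pi : V → ℤ
  rr : V → ℤ
  eps : V → Bool
  par_root : par root = root
  inj : Function.Injective pi
  le_rr : ∀ v, pi v ≤ rr v
  par_le : ∀ v, pi (par v) ≤ pi v
  rr_le : ∀ v, v ≠ root → rr v ≤ rr (par v)
  eps_par : ∀ v, v ≠ root → eps (par v) ≠ eps v
  adj : ∀ u v, G.Adj u v ↔ (u ≠ v ∧ (par u = v ∨ par v = u))
  anc : ∀ u w, pi w ≤ pi u → pi u ≤ rr w → w ≠ u → pi w ≤ pi (par u)

variable {V : Type*} {G : SimpleGraph V} (D : DFSData G)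

/-- The segment assigned to `v`. -/
def dseg (v : V) : Set (ℤ × ℤ) :=
  if D.eps v then {p : ℤ × ℤ | p.1 = D.pi v ∧ -(D.rr v) ≤ p.2 ∧ p.2 ≤ -(D.pi (D.par v))}
  else {p : ℤ × ℤ | p.2 = -(D.pi v) ∧ D.pi (D.par v) ≤ p.1 ∧ p.1 ≤ D.rr v}

lemma dseg_of_eps_true {v : V} (h : D.eps v = true) :
    dseg D v = {p : ℤ × ℤ | p.1 = D.pi v ∧ -(D.rr v) ≤ p.2 ∧ p.2 ≤ -(D.pi (D.par v))} := by
  simp [dseg, h]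

lemma dseg_of_eps_false {v : V} (h : D.eps v = false) :
    dseg D v = {p : ℤ × ℤ | p.2 = -(D.pi v) ∧ D.pi (D.par v) ≤ p.1 ∧ p.1 ≤ D.rr v} := by
  simp [dseg, h]

lemma bool_opp {a b : Bool} (h : a ≠ b) (ha : a = false) : b = true := by
  subst ha
  cases b with
  | false => exact absurd rfl h
  | true => rfl

lemma bool_opp' {a b : Bool} (h : a ≠ b) (ha : a = true) : b = false := by
  subst ha
  cases b with
  | false => rfl
  | true => exact absurd rfl h

/-- parent relation forces opposite orientations -/
lemma eps_ne_of_adj {u v : V} (h : G.Adj u v) : D.eps u ≠ D.eps v := by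
  obtain ⟨hne, hp | hp⟩ := (D.adj u v).mp h
  · have hu : u ≠ D.root := by rintro rfl; rw [D.par_root] at hp; exact hne hp
    have h2 := D.eps_par u hu; rw [hp] at h2; exact fun e => h2 (e ▸ rfl)
  · have hv : v ≠ D.root := by rintro rfl; rw [D.par_root] at hp; exact hne hp.symm
    have h2 := D.eps_par v hv; rw [hp] at h2; exact h2

/-- characterization of a mixed intersection -/
lemma mem_inter_mixed {u w : V} (hu : D.eps u = false) (hw : D.eps w = true) (p : ℤ × ℤ) :
    p ∈ dseg D u ∩ dseg D w ↔
      (p = (D.pi w, -(D.pi u)) ∧ D.pi (D.par u) ≤ D.pi w ∧ D.pi w ≤ D.rr u ∧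
        D.pi (D.par w) ≤ D.pi u ∧ D.pi u ≤ D.rr w) := by
  rw [Set.mem_inter_iff, dseg_of_eps_false D hu, dseg_of_eps_true D hw]
  simp only [Set.mem_setOf_eq]
  constructor
  · rintro ⟨⟨h1, h2, h3⟩, ⟨h4, h5, h6⟩⟩
    refine ⟨Prod.ext_iff.mpr ⟨h4, h1⟩, by omega, by omega, by omega, by omega⟩
  · rintro ⟨rfl, h1, h2, h3, h4⟩
    exact ⟨⟨rfl, h1, h2⟩, ⟨rfl, by omega, by omega⟩⟩

/-- the geometric conditions hold iff adjacent (in the mixed case) -/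
lemma cond_iff_adj {u w : V} (hu : D.eps u = false) (hw : D.eps w = true) (hne : u ≠ w) :
    (D.pi (D.par u) ≤ D.pi w ∧ D.pi w ≤ D.rr u ∧ D.pi (D.par w) ≤ D.pi u ∧ D.pi u ≤ D.rr w)
      ↔ G.Adj u w := by
  constructor
  · rintro ⟨c1, c2, c3, c4⟩
    rcases le_or_gt (D.pi u) (D.pi w) with hle | hlt
    · have h := D.anc w u hle c2 hne
      have : D.pi u = D.pi (D.par w) := le_antisymm h c3
      have : D.par w = u := D.inj this.symm
      exact (D.adj u w).mpr ⟨hne, Or.inr this⟩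
    · have h := D.anc u w (le_of_lt hlt) c4 (Ne.symm hne)
      have : D.pi w = D.pi (D.par u) := le_antisymm h c1
      have : D.par u = w := D.inj this.symm
      exact (D.adj u w).mpr ⟨hne, Or.inl this⟩
  · intro hadj
    obtain ⟨_, hp | hp⟩ := (D.adj u w).mp hadj
    · -- par u = w
      have hu' : u ≠ D.root := by rintro rfl; rw [D.par_root] at hp; exact hne hp
      refine ⟨le_of_eq (by rw [hp]), ?_, ?_, ?_⟩
      · rw [← hp]; exact le_trans (D.par_le u) (D.le_rr u)
      · calc D.pi (D.par w) ≤ D.pi w := D.par_le w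
          _ = D.pi (D.par u) := by rw [hp]
          _ ≤ D.pi u := D.par_le u
      · rw [← hp]; exact le_trans (D.le_rr u) (D.rr_le u hu')
    · -- par w = u
      have hw' : w ≠ D.root := by rintro rfl; rw [D.par_root] at hp; exact hne hp.symm
      refine ⟨?_, ?_, le_of_eq (by rw [hp]), ?_⟩
      · calc D.pi (D.par u) ≤ D.pi u := D.par_le u
          _ = D.pi (D.par w) := by rw [hp]
          _ ≤ D.pi w := D.par_le w
      · calc D.pi w ≤ D.rr w := D.le_rr w
          _ ≤ D.rr (D.par w) := D.rr_le w hw'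
          _ = D.rr u := by rw [hp]
      · rw [← hp]; exact le_trans (D.par_le w) (D.le_rr w)

/-- same-orientation segments are disjoint -/
lemma inter_same (u w : V) (hne : u ≠ w) (h : D.eps u = D.eps w) :
    dseg D u ∩ dseg D w = ∅ := by
  ext p
  simp only [Set.mem_inter_iff, Set.mem_empty_iff_false, iff_false]
  rintro ⟨h1, h2⟩
  cases hc : D.eps u with
  | true =>
    rw [dseg_of_eps_true D hc] at h1
    rw [dseg_of_eps_true D (h ▸ hc)] at h2
    simp only [Set.mem_setOf_eq] at h1 h2
    exact hne (D.inj (h1.1.symm.trans h2.1))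
  | false =>
    rw [dseg_of_eps_false D hc] at h1
    rw [dseg_of_eps_false D (h ▸ hc)] at h2
    simp only [Set.mem_setOf_eq] at h1 h2
    have := h1.1.symm.trans h2.1
    exact hne (D.inj (by omega))

def toRep : ContactB0VPGRep G where
  seg := dseg D
  isSeg v := by
    cases hc : D.eps v with
    | false =>
      left
      exact ⟨-(D.pi v), D.pi (D.par v), D.rr v, le_trans (D.par_le v) (D.le_rr v),
        dseg_of_eps_false D hc⟩
    | true =>
      right
      refine ⟨D.pi v, -(D.rr v), -(D.pi (D.par v)), ?_, dseg_of_eps_true D hc⟩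
      have := le_trans (D.par_le v) (D.le_rr v); omega
  adj_iff u v hne := by
    rcases eq_or_ne (D.eps u) (D.eps v) with he | he
    · constructor
      · intro hadj; exact absurd he (eps_ne_of_adj D hadj)
      · intro ⟨p, hp⟩; rw [inter_same D u v hne he] at hp; exact absurd hp (Set.notMem_empty p)
    · cases hu : D.eps u with
      | false =>
        have hv : D.eps v = true := bool_opp he hu
        rw [show (dseg D u ∩ dseg D v).Nonempty ↔ _ from
          ⟨fun ⟨p, hp⟩ => ((mem_inter_mixed D hu hv p).mp hp).2,
           fun h => ⟨(D.pi v, -(D.pi u)), (mem_inter_mixed D hu hv _).mpr ⟨rfl, h⟩⟩⟩]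
        exact (cond_iff_adj D hu hv hne).symm
      | true =>
        have hv : D.eps v = false := bool_opp' he hu
        rw [Set.inter_comm, show (dseg D v ∩ dseg D u).Nonempty ↔ _ from
          ⟨fun ⟨p, hp⟩ => ((mem_inter_mixed D hv hu p).mp hp).2,
           fun h => ⟨(D.pi u, -(D.pi v)), (mem_inter_mixed D hv hu _).mpr ⟨rfl, h⟩⟩⟩]
        rw [G.adj_comm]
        exact (cond_iff_adj D hv hu hne.symm).symm
  inter_subsingleton u v hne := by
    rcases eq_or_ne (D.eps u) (D.eps v) with he | he
    · rw [inter_same D u v hne he]; exact Set.subsingleton_empty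
    · cases hu : D.eps u with
      | false =>
        have hv : D.eps v = true := bool_opp he hu
        intro p hp q hq
        rw [mem_inter_mixed D hu hv] at hp hq
        rw [hp.1, hq.1]
      | true =>
        have hv : D.eps v = false := bool_opp' he hu
        intro p hp q hq
        rw [Set.inter_comm, mem_inter_mixed D hv hu] at hp hq
        rw [hp.1, hq.1]
  contact u v hne p hp := by
    rcases eq_or_ne (D.eps u) (D.eps v) with he | he
    · rw [inter_same D u v hne he] at hp; exact absurd hp (Set.notMem_empty p)
    · -- wlog via helper
      have key : ∀ a b : V, a ≠ b → D.eps a = false → D.eps b = true →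
          ∀ q ∈ dseg D a ∩ dseg D b, IsEndpointOf q (dseg D a) ∨ IsEndpointOf q (dseg D b) := by
        intro a b hab ha hb q hq
        rw [mem_inter_mixed D ha hb] at hq
        obtain ⟨rfl, c1, c2, c3, c4⟩ := hq
        have hadj := (cond_iff_adj D ha hb hab).mp ⟨c1, c2, c3, c4⟩
        obtain ⟨_, hpar | hpar⟩ := (D.adj a b).mp hadj
        · -- par a = b : left endpoint of a's horizontal segment
          left; left
          refine ⟨-(D.pi a), D.pi (D.par a), D.rr a, le_trans (D.par_le a) (D.le_rr a),
            dseg_of_eps_false D ha, Or.inl ?_⟩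
          rw [hpar]
        · -- par b = a : top endpoint of b's vertical segment
          right; right
          refine ⟨D.pi b, -(D.rr b), -(D.pi (D.par b)), ?_, dseg_of_eps_true D hb, Or.inr ?_⟩
          · have := le_trans (D.par_le b) (D.le_rr b); omega
          · rw [hpar]
      cases hu : D.eps u with
      | false =>
        have hv : D.eps v = true := bool_opp he hu
        exact key u v hne hu hv p hp
      | true =>
        have hv : D.eps v = false := bool_opp' he hu
        exact (key v u hne.symm hv hu p (Set.inter_comm _ _ ▸ hp)).symm



theorem exists_dfsData {V : Type*} [Fintype V] (G : SimpleGraph V)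
    (hconn : G.Connected) (hacyc : G.IsAcyclic) : Nonempty (DFSData G) := by
  classical
  letI : LinearOrder V :=
    LinearOrder.lift' (fun v => Fintype.equivFin V v) (Fintype.equivFin V).injective
  have ht : G.IsTree := ⟨hconn, hacyc⟩
  obtain ⟨root⟩ := hconn.nonempty
  set P : (v : V) → G.Walk root v := fun v => (ht.existsUnique_path root v).exists.choose with hPdef
  have hP : ∀ v, (P v).IsPath := fun v => (ht.existsUnique_path root v).exists.choose_spec
  have hUniq : ∀ (v) (q : G.Walk root v), q.IsPath → q = P v := fun v q hq =>
    (ht.existsUnique_path root v).unique hq (hP v)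
  set key : V → List V := fun v => (P v).support with hkeydef
  have key_root : key root = [root] := by
    have h0 : (SimpleGraph.Walk.nil : G.Walk root root) = P root :=
      hUniq root SimpleGraph.Walk.nil SimpleGraph.Walk.IsPath.nil
    show (P root).support = [root]
    rw [← h0, SimpleGraph.Walk.support_nil]
  have key_ne_nil : ∀ v, key v ≠ [] := fun v => SimpleGraph.Walk.support_ne_nil _
  have key_head : ∀ v, [root] <+: key v := fun v =>
    ⟨(P v).support.tail, ((P v).support_eq_cons).symm⟩
  have hdecomp : ∀ v, v ≠ root → ∃ x, G.Adj x v ∧ key v = key x ++ [v] := by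
    intro v hv
    obtain ⟨x, hadj, q, hq⟩ := SimpleGraph.Walk.exists_eq_cons_of_ne hv (P v).reverse
    refine ⟨x, hadj.symm, ?_⟩
    have hPv : P v = q.reverse.concat hadj.symm := by
      calc P v = (P v).reverse.reverse := ((P v).reverse_reverse).symm
        _ = (SimpleGraph.Walk.cons hadj q).reverse := by rw [hq]
        _ = q.reverse.concat hadj.symm := SimpleGraph.Walk.reverse_cons hadj q
    have hqp : q.IsPath := by
      have h1 := (hP v).reverse
      rw [hq] at h1
      exact h1.of_cons
    have hqr : q.reverse = P x := hUniq x q.reverse hqp.reverse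
    show (P v).support = (P x).support ++ [v]
    rw [hPv, SimpleGraph.Walk.support_concat, ← hqr]
  set par : V → V := fun v => if h : v = root then v else (hdecomp v h).choose with hpardef
  have par_root : par root = root := by simp [hpardef]
  have hpar_spec : ∀ (v) (h : v ≠ root), G.Adj (par v) v ∧ key v = key (par v) ++ [v] := by
    intro v h
    have : par v = (hdecomp v h).choose := by simp [hpardef, h]
    rw [this]
    exact (hdecomp v h).choose_spec
  have key_last : ∀ v, ∃ l, key v = l ++ [v] := by
    intro v
    rcases eq_or_ne v root with rfl | hv
    · exact ⟨[], by rw [key_root]; rfl⟩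
    · exact ⟨key (par v), (hpar_spec v hv).2⟩
  have key_inj : Function.Injective key := by
    intro u v h
    obtain ⟨l1, h1⟩ := key_last u
    obtain ⟨l2, h2⟩ := key_last v
    rw [h1, h2] at h
    exact concat_last_eq h
  -- pi
  set pis : V → Finset V := fun v => Finset.univ.filter (fun u => key u < key v) with hpisdef
  set pi : V → ℤ := fun v => ((pis v).card : ℤ) with hpidef
  have pi_mono : ∀ {u v : V}, key u < key v → pi u < pi v := by
    intro u v h
    have hss : pis u ⊂ pis v := by
      constructor
      · intro x hx
        simp only [hpisdef, Finset.mem_filter, Finset.mem_univ, true_and] at hx ⊢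
        exact lt_trans hx h
      · intro hsub
        have hu : u ∈ pis v := by
          simp only [hpisdef, Finset.mem_filter, Finset.mem_univ, true_and]
          exact h
        have := hsub hu
        simp only [hpisdef, Finset.mem_filter, Finset.mem_univ, true_and] at this
        exact lt_irrefl _ this
    have := Finset.card_lt_card hss
    simp only [hpidef]
    exact_mod_cast this
  have pi_le_mono : ∀ {u v : V}, key u ≤ key v → pi u ≤ pi v := by
    intro u v h
    rcases eq_or_lt_of_le h with he | hlt
    · rw [key_inj he]
    · exact le_of_lt (pi_mono hlt)
  have pi_reflect : ∀ {u v : V}, pi u ≤ pi v → key u ≤ key v := by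
    intro u v h
    by_contra hc
    exact absurd (pi_mono (lt_of_not_ge hc)) (not_lt_of_ge h)
  have pi_inj : Function.Injective pi := by
    intro u v h
    exact key_inj (le_antisymm (pi_reflect (le_of_eq h)) (pi_reflect (le_of_eq h.symm)))
  -- rr
  set Dset : V → Finset V := fun w => Finset.univ.filter (fun u => key w <+: key u) with hDdef
  have hDmem : ∀ w, w ∈ Dset w := by
    intro w
    simp only [hDdef, Finset.mem_filter, Finset.mem_univ, true_and]
    exact List.prefix_refl _
  have hDne : ∀ w, ((Dset w).image pi).Nonempty := fun w =>
    ⟨pi w, Finset.mem_image_of_mem _ (hDmem w)⟩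
  set rr : V → ℤ := fun w => ((Dset w).image pi).max' (hDne w) with hrrdef
  have le_rr : ∀ v, pi v ≤ rr v := fun v =>
    Finset.le_max' _ _ (Finset.mem_image_of_mem _ (hDmem v))
  have rr_mem : ∀ w, ∃ x, (key w <+: key x) ∧ rr w = pi x := by
    intro w
    have := Finset.max'_mem ((Dset w).image pi) (hDne w)
    rw [Finset.mem_image] at this
    obtain ⟨x, hx, hpx⟩ := this
    simp only [hDdef, Finset.mem_filter, Finset.mem_univ, true_and] at hx
    exact ⟨x, hx, hpx.symm⟩
  have key_prefix_par : ∀ (v), v ≠ root → key (par v) <+: key v := by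
    intro v h
    rw [(hpar_spec v h).2]
    exact List.prefix_append _ _
  have par_le : ∀ v, pi (par v) ≤ pi v := by
    intro v
    rcases eq_or_ne v root with rfl | hv
    · rw [par_root]
    · exact pi_le_mono (le_of_prefix (key_prefix_par v hv))
  have rr_le : ∀ (v), v ≠ root → rr v ≤ rr (par v) := by
    intro v hv
    apply Finset.max'_subset
    apply Finset.image_subset_image
    intro x hx
    simp only [hDdef, Finset.mem_filter, Finset.mem_univ, true_and] at hx ⊢
    exact (key_prefix_par v hv).trans hx
  -- eps
  set eps : V → Bool := fun v => decide (Even (key v).length) with hepsdef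
  have eps_par : ∀ (v), v ≠ root → eps (par v) ≠ eps v := by
    intro v hv
    have hlen : (key v).length = (key (par v)).length + 1 := by
      rw [(hpar_spec v hv).2]; simp
    by_cases h : Even ((key (par v)).length) <;>
      simp [hepsdef, hlen, Nat.even_add_one, h]
  -- helper for paths
  have isPath_concat : ∀ {a b : V} (W : G.Walk root a) (h : G.Adj a b),
      W.IsPath → b ∉ W.support → (W.concat h).IsPath := by
    intro a b W h hW hb
    rw [← SimpleGraph.Walk.isPath_reverse_iff, SimpleGraph.Walk.reverse_concat]
    exact SimpleGraph.Walk.IsPath.cons hW.reverse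
      (by simpa [SimpleGraph.Walk.support_reverse] using hb)
  have par_eq_of : ∀ {x v : V}, G.Adj x v → key v = key x ++ [v] → par v = x := by
    intro x v hadj hk
    have hv : v ≠ root := by
      rintro rfl
      rw [key_root] at hk
      have hlen := congrArg List.length hk
      simp only [List.length_append, List.length_cons, List.length_nil] at hlen
      exact (key_ne_nil x) (List.eq_nil_of_length_eq_zero (by omega))
    have h2 := (hpar_spec v hv).2
    rw [hk] at h2
    have h3 : key x = key (par v) := (List.append_inj' h2 rfl).1
    exact (key_inj h3).symm
  -- adjacency characterization
  have adj_char : ∀ u v, G.Adj u v ↔ (u ≠ v ∧ (par u = v ∨ par v = u)) := by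
    intro u v
    constructor
    · intro hadj
      refine ⟨hadj.ne, ?_⟩
      by_cases hu : u ∈ (P v).support
      · right
        have hQ := hP v
        have hvu : v ≠ u := hadj.ne'
        have hvt : v ∉ ((P v).takeUntil u hu).support := by
          have hnd : (((P v).takeUntil u hu).support ++
              ((P v).dropUntil u hu).support.tail).Nodup := by
            rw [← SimpleGraph.Walk.support_append, SimpleGraph.Walk.take_spec]
            exact hQ.support_nodup
          have hvd : v ∈ ((P v).dropUntil u hu).support.tail := by
            have hmem : v ∈ ((P v).dropUntil u hu).support :=
              SimpleGraph.Walk.end_mem_support _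
            rcases (SimpleGraph.Walk.mem_support_iff _).mp hmem with h | h
            · exact absurd h hvu
            · exact h
          exact fun hvt => (List.disjoint_of_nodup_append hnd) hvt hvd
        have hW := hQ.takeUntil hu
        have hcp := isPath_concat _ hadj hW hvt
        have hkey : key v = key u ++ [v] := by
          have h1 : ((P v).takeUntil u hu).concat hadj = P v := hUniq v _ hcp
          have h2 : (P v).takeUntil u hu = P u := hUniq u _ hW
          calc key v = ((((P v).takeUntil u hu)).concat hadj).support := by rw [h1]
            _ = ((P v).takeUntil u hu).support ++ [v] := by
                rw [SimpleGraph.Walk.support_concat]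
            _ = key u ++ [v] := by rw [h2]
        exact par_eq_of hadj hkey
      · left
        have hcp := isPath_concat (P v) hadj.symm (hP v) hu
        have hkey : key u = key v ++ [u] := by
          have h1 : (P v).concat hadj.symm = P u := hUniq u _ hcp
          calc key u = ((P v).concat hadj.symm).support := by rw [h1]
            _ = key v ++ [u] := by
                exact SimpleGraph.Walk.support_concat _ _
        exact par_eq_of hadj.symm hkey
    · rintro ⟨hne, hp | hp⟩
      · have hu : u ≠ root := by rintro rfl; rw [par_root] at hp; exact hne hp
        have := (hpar_spec u hu).1
        rw [hp] at this
        exact this.symm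
      · have hv : v ≠ root := by rintro rfl; rw [par_root] at hp; exact hne hp.symm
        have := (hpar_spec v hv).1
        rw [hp] at this
        exact this
  -- anc
  have anc : ∀ u w, pi w ≤ pi u → pi u ≤ rr w → w ≠ u → pi w ≤ pi (par u) := by
    intro u w h1 h2 hne
    obtain ⟨x, hx, hrr⟩ := rr_mem w
    rw [hrr] at h2
    have hku : key w ≤ key u := pi_reflect h1
    have hux : key u ≤ key x := pi_reflect h2
    have hpre : key w <+: key u := prefix_of_le_of_le _ _ _ hx hku hux
    rcases eq_or_ne u root with hur | hu
    · exfalso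
      apply hne
      have ha : key w ≤ key root := by rw [← hur]; exact hku
      have hb : key root ≤ key w := by rw [key_root]; exact le_of_prefix (key_head w)
      exact (key_inj (le_antisymm ha hb)).trans hur.symm
    · have hdec := (hpar_spec u hu).2
      rw [hdec] at hpre
      rcases prefix_concat_cases hpre with heq | hpre'
      · exact absurd (key_inj (heq.trans hdec.symm)) hne
      · exact pi_le_mono (le_of_prefix hpre')
  exact ⟨⟨root, par, pi, rr, eps, par_root, pi_inj, le_rr, par_le, rr_le, eps_par, adj_char, anc⟩⟩

end TreeVpg

/-- Every tree is a contact B₀-VPG graph. -/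
theorem stmt_9 {V : Type*} [Fintype V] (G : SimpleGraph V)
    (hconn : G.Connected) (hacyc : G.IsAcyclic) : ContactB0VPG G := by
  obtain ⟨D⟩ := TreeVpg.exists_dfsData G hconn hacyc
  exact ⟨TreeVpg.toRep D⟩
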